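/- For any N-qubit quantum state ρ that is invariant under every permutation of its N = 2n subsystems, and any choice of two binary-outcome POVMs {M^{(l)}_{a|1}}, {M^{(l)}_{a|2}} for each of the n parties, the joint probability distribution P(a_1,...,a_n | j_1,...,j_n) = Tr(ρ_red · M^{(1)}_{a_1|j_1} ⊗ ... ⊗ M^{(n)}_{a_n|j_n}), where ρ_red is the reduced state of ρ on the first n subsystems, can equivalently be obtained by measuring commuting observables: namely, distributing the qudit pairs (l, l+n) of ρ to party l and having party l measure setting 1 on qudit l and setting 2 on qudit l+n. -/
import Mathlib


open Matrix
open scoped ComplexOrder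

/-- Tensor product of one-qudit operators as a matrix on `Fin m → Fin d`. -/
def tensOp {m d : ℕ} (M : Fin m → Matrix (Fin d) (Fin d) ℂ) :
    Matrix (Fin m → Fin d) (Fin m → Fin d) ℂ :=
  Matrix.of fun x y => ∏ l, M l (x l) (y l)


private def swapFun (n : ℕ) (j : Fin n → Fin 2) (u : Fin (n + n)) : Fin (n + n) :=
  Fin.addCases
    (fun l : Fin n => if j l = 1 then Fin.natAdd n l else Fin.castAdd n l)
    (fun l : Fin n => if j l = 1 then Fin.castAdd n l else Fin.natAdd n l) u

private lemma swapFun_castAdd (n : ℕ) (j : Fin n → Fin 2) (l : Fin n) :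
    swapFun n j (Fin.castAdd n l) = if j l = 1 then Fin.natAdd n l else Fin.castAdd n l := by
  rw [swapFun, Fin.addCases_left]

private lemma swapFun_natAdd (n : ℕ) (j : Fin n → Fin 2) (l : Fin n) :
    swapFun n j (Fin.natAdd n l) = if j l = 1 then Fin.castAdd n l else Fin.natAdd n l := by
  rw [swapFun, Fin.addCases_right]

private lemma swapFun_invol (n : ℕ) (j : Fin n → Fin 2) (u : Fin (n + n)) :
    swapFun n j (swapFun n j u) = u := by
  refine Fin.addCases (fun l => ?_) (fun l => ?_) u <;> by_cases h : j l = 1 <;>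
    simp [swapFun_castAdd, swapFun_natAdd, h, ← Fin.natAdd_eq_addNat]

private def swapPerm (n : ℕ) (j : Fin n → Fin 2) : Equiv.Perm (Fin (n + n)) :=
  ⟨swapFun n j, swapFun n j, swapFun_invol n j, swapFun_invol n j⟩

private lemma delta_prod {n d : ℕ} (w z : Fin n → Fin d) :
    (∏ l, (1 : Matrix (Fin d) (Fin d) ℂ) (w l) (z l)) = if w = z then 1 else 0 := by
  by_cases h : w = z
  · simp [h, Matrix.one_apply]
  · obtain ⟨l, hl⟩ := Function.ne_iff.mp h
    rw [if_neg h]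
    exact Finset.prod_eq_zero (Finset.mem_univ l) (by simp [Matrix.one_apply, hl])

/-- For a permutationally invariant state `ρ` on `2n` qudits, the joint probability
distribution obtained by measuring two-setting binary-outcome POVMs on the `n`-qudit
reduced state equals the distribution obtained by giving party `l` the qudit pair
`(l, l+n)` and measuring setting `0` on qudit `l` and setting `1` on qudit `l+n`
(commuting measurements). -/
theorem stmt3 (n d : ℕ)
    (ρ : Matrix (Fin (n + n) → Fin d) (Fin (n + n) → Fin d) ℂ)
    (hρ : ρ.PosSemidef) (htr : ρ.trace = 1)
    (hperm : ∀ σ : Equiv.Perm (Fin (n + n)), ∀ x y, ρ (x ∘ σ) (y ∘ σ) = ρ x y)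
    (M : Fin n → Fin 2 → Fin 2 → Matrix (Fin d) (Fin d) ℂ)
    (hpos : ∀ l j a, (M l j a).PosSemidef)
    (hsum : ∀ l j, M l j 0 + M l j 1 = 1)
    (a : Fin n → Fin 2) (j : Fin n → Fin 2) :
    ((Matrix.of fun x y : Fin n → Fin d =>
        ∑ z : Fin n → Fin d, ρ (Fin.append x z) (Fin.append y z)) *
      tensOp (fun l => M l (j l) (a l))).trace
    = (ρ * tensOp (fun u : Fin (n + n) =>
        Fin.addCases
          (fun l : Fin n => if j l = 0 then M l 0 (a l) else 1)
          (fun l : Fin n => if j l = 1 then M l 1 (a l) else 1) u)).trace := by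
    classical
  -- trace of a product as a double sum, on each index type
  have trL : ∀ A B : Matrix (Fin n → Fin d) (Fin n → Fin d) ℂ,
      (A * B).trace = ∑ x, ∑ y, A x y * B y x := by
    intro A B; simp [Matrix.trace, Matrix.mul_apply, Matrix.diag]
  have trR : ∀ A B : Matrix (Fin (n + n) → Fin d) (Fin (n + n) → Fin d) ℂ,
      (A * B).trace = ∑ x, ∑ y, A x y * B y x := by
    intro A B; simp [Matrix.trace, Matrix.mul_apply, Matrix.diag]
  have fin2 : ∀ x : Fin 2, x ≠ 1 → x = 0 := by decide
  -- the swapped local operators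
  have hNg : ∀ u : Fin (n + n),
      Fin.addCases (motive := fun _ => Matrix (Fin d) (Fin d) ℂ)
          (fun l : Fin n => if j l = 0 then M l 0 (a l) else 1)
          (fun l : Fin n => if j l = 1 then M l 1 (a l) else 1) (swapFun n j u)
        = Fin.addCases (motive := fun _ => Matrix (Fin d) (Fin d) ℂ) (fun l : Fin n => M l (j l) (a l))
            (fun _ : Fin n => (1 : Matrix (Fin d) (Fin d) ℂ)) u := by
    intro u
    refine Fin.addCases (fun l => ?_) (fun l => ?_) u
    · by_cases h : j l = 1
      · rw [swapFun_castAdd, if_pos h, Fin.addCases_right, Fin.addCases_left, if_pos h, h]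
      · have h0 : j l = 0 := fin2 _ h
        rw [swapFun_castAdd, if_neg h, Fin.addCases_left, Fin.addCases_left, if_pos h0, h0]
    · by_cases h : j l = 1
      · rw [swapFun_natAdd, if_pos h, Fin.addCases_left, Fin.addCases_right,
          if_neg (by rw [h]; decide)]
      · rw [swapFun_natAdd, if_neg h, Fin.addCases_right, Fin.addCases_right, if_neg h]
  -- the reindexing equivalence on 2n-qudit configurations
  let E : (Fin (n + n) → Fin d) ≃ (Fin (n + n) → Fin d) :=
    ⟨fun X => X ∘ swapFun n j, fun X => X ∘ swapFun n j,
      fun X => funext fun u => congrArg X (swapFun_invol n j u),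
      fun X => funext fun u => congrArg X (swapFun_invol n j u)⟩
  -- canonical form
  set S : ℂ := ∑ x : Fin n → Fin d, ∑ z : Fin n → Fin d, ∑ y : Fin n → Fin d,
      ρ (Fin.append x z) (Fin.append y z) * ∏ l, M l (j l) (a l) (y l) (x l) with hS
  have hL : ((Matrix.of fun x y : Fin n → Fin d =>
        ∑ z : Fin n → Fin d, ρ (Fin.append x z) (Fin.append y z)) *
      tensOp (fun l => M l (j l) (a l))).trace = S := by
    rw [trL, hS]
    refine Finset.sum_congr rfl fun x _ => ?_
    rw [Finset.sum_comm]
    refine Finset.sum_congr rfl fun y _ => ?_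
    simp [tensOp, Finset.sum_mul]
  have hR : (ρ * tensOp (fun u : Fin (n + n) =>
        Fin.addCases (motive := fun _ => Matrix (Fin d) (Fin d) ℂ)
          (fun l : Fin n => if j l = 0 then M l 0 (a l) else 1)
          (fun l : Fin n => if j l = 1 then M l 1 (a l) else 1) u)).trace = S := by
    rw [trR]
    calc
      (∑ X : Fin (n + n) → Fin d, ∑ Y : Fin (n + n) → Fin d,
          ρ X Y * tensOp (fun u : Fin (n + n) =>
            Fin.addCases
              (fun l : Fin n => if j l = 0 then M l 0 (a l) else 1)
              (fun l : Fin n => if j l = 1 then M l 1 (a l) else 1) u) Y X)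
        = ∑ X : Fin (n + n) → Fin d, ∑ Y : Fin (n + n) → Fin d,
            ρ (X ∘ swapFun n j) (Y ∘ swapFun n j) *
              ∏ u, Fin.addCases (motive := fun _ => Matrix (Fin d) (Fin d) ℂ)
                (fun l : Fin n => if j l = 0 then M l 0 (a l) else 1)
                (fun l : Fin n => if j l = 1 then M l 1 (a l) else 1) u
                (Y (swapFun n j u)) (X (swapFun n j u)) := by
          refine (Fintype.sum_equiv E _ _ fun X => ?_).symm
          exact Fintype.sum_equiv E _ _ fun Y => rfl
      _ = ∑ X : Fin (n + n) → Fin d, ∑ Y : Fin (n + n) → Fin d,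
            ρ X Y * ∏ u, Fin.addCases (motive := fun _ => Matrix (Fin d) (Fin d) ℂ) (fun l : Fin n => M l (j l) (a l))
                (fun _ : Fin n => (1 : Matrix (Fin d) (Fin d) ℂ)) u (Y u) (X u) := by
          refine Finset.sum_congr rfl fun X _ => Finset.sum_congr rfl fun Y _ => ?_
          have h1 : ρ (X ∘ swapFun n j) (Y ∘ swapFun n j) = ρ X Y :=
            hperm (swapPerm n j) X Y
          rw [h1]
          congr 1
          rw [← Equiv.prod_comp (swapPerm n j)
            (fun u => Fin.addCases (motive := fun _ => Matrix (Fin d) (Fin d) ℂ) (fun l : Fin n => M l (j l) (a l))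
              (fun _ : Fin n => (1 : Matrix (Fin d) (Fin d) ℂ)) u (Y u) (X u))]
          refine Finset.prod_congr rfl fun u _ => ?_
          have h2 := hNg (swapFun n j u)
          rw [swapFun_invol] at h2
          exact congrFun (congrFun h2 (Y (swapFun n j u))) (X (swapFun n j u))
      _ = ∑ x : Fin n → Fin d, ∑ z : Fin n → Fin d,
            ∑ y : Fin n → Fin d, ∑ w : Fin n → Fin d,
            ρ (Fin.append x z) (Fin.append y w) *
              ((∏ l, M l (j l) (a l) (y l) (x l)) *
                ∏ l, (1 : Matrix (Fin d) (Fin d) ℂ) (w l) (z l)) := by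
          rw [← Equiv.sum_comp (Fin.appendEquiv n n), Fintype.sum_prod_type]
          refine Finset.sum_congr rfl fun x _ => Finset.sum_congr rfl fun z _ => ?_
          rw [← Equiv.sum_comp (Fin.appendEquiv n n), Fintype.sum_prod_type]
          refine Finset.sum_congr rfl fun y _ => Finset.sum_congr rfl fun w _ => ?_
          simp only [Fin.appendEquiv_apply]
          congr 1
          rw [Fin.prod_univ_add]
          congr 1
          · exact Finset.prod_congr rfl fun l _ => by
              rw [Fin.addCases_left, Fin.append_left, Fin.append_left]
          · exact Finset.prod_congr rfl fun l _ => by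
              rw [Fin.addCases_right, Fin.append_right, Fin.append_right]
      _ = S := by
          rw [hS]
          refine Finset.sum_congr rfl fun x _ => Finset.sum_congr rfl fun z _ =>
            Finset.sum_congr rfl fun y _ => ?_
          rw [Finset.sum_congr rfl fun w (_ : w ∈ Finset.univ) => by
            rw [delta_prod w z]]
          simp [Finset.sum_ite_eq]
  rw [hL, hR]
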